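/- The 3-VFCA rule f(x,y,z) = (x₁y₁ + y₂z₁ + y₃z₁, x₂y₁ + y₂z₂ + y₂z₃, x₃y₁ + y₃z₂ + y₃z₃) is complete number-conserving on periodic configurations in the simplex Δ of any period L. -/

import Mathlib

lemma shift_sum (L : ℕ) (g : ℤ → ℝ) (hg : ∀ i, g (i + L) = g i) :
    ∑ i ∈ Finset.range L, g ((i : ℤ) + 1) = ∑ i ∈ Finset.range L, g i := by
  have h1 : ∑ i ∈ Finset.range L, g ((i : ℤ) + 1)
      = ∑ i ∈ Finset.range L, g (((i + 1 : ℕ) : ℤ)) := by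
    apply Finset.sum_congr rfl; intro i _; push_cast; ring_nf
  have h2 := Finset.sum_range_succ' (fun i : ℕ => g (i : ℤ)) L
  have h3 := Finset.sum_range_succ (fun i : ℕ => g (i : ℤ)) L
  have h4 : g ((L : ℤ)) = g 0 := by simpa using hg 0
  norm_num at h2
  rw [h1]
  linarith [h2, h3, h4]

theorem stmt_12 (L : ℕ) (hL : 0 < L)
    (f : (Fin 3 → ℝ) → (Fin 3 → ℝ) → (Fin 3 → ℝ) → (Fin 3 → ℝ))
    (hf : ∀ x y z, f x y z =
      ![x 0 * y 0 + y 1 * z 0 + y 2 * z 0,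
        x 1 * y 0 + y 1 * z 1 + y 1 * z 2,
        x 2 * y 0 + y 2 * z 1 + y 2 * z 2])
    (x : ℤ → Fin 3 → ℝ) (hper : ∀ i, x (i + L) = x i)
    (hΔ : ∀ i, (∑ m, x i m) = 1 ∧ ∀ m, 0 ≤ x i m) :
    ∀ k, ∑ i ∈ Finset.range L, f (x ((i : ℤ) - 1)) (x (i : ℤ)) (x ((i : ℤ) + 1)) k
      = ∑ i ∈ Finset.range L, x (i : ℤ) k := by
  have hsum : ∀ i : ℤ, x i 0 + x i 1 + x i 2 = 1 := by
    intro i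
    have := (hΔ i).1
    simpa [Fin.sum_univ_three] using this
  -- shift lemmas specialized
  have hx : ∀ m : Fin 3, ∀ i : ℤ, x (i + L) m = x i m := fun m i => congrFun (hper i) m
  intro k
  have key : ∀ m : Fin 3,
      (∑ i ∈ Finset.range L, x ((i : ℤ) - 1) m * x (i : ℤ) 0)
        = ∑ i ∈ Finset.range L, x (i : ℤ) m * x ((i : ℤ) + 1) 0 := by
    intro m
    have := shift_sum L (fun i => x (i - 1) m * x i 0) (by
      intro i
      show x (i + (L : ℤ) - 1) m * x (i + L) 0 = x (i - 1) m * x i 0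
      rw [show i + (L : ℤ) - 1 = (i - 1) + L by ring, hper, hper])
    simp only [show ∀ i : ℤ, i + 1 - 1 = i from fun i => by ring] at this
    exact this.symm
  have hshift1 : ∀ m : Fin 3,
      (∑ i ∈ Finset.range L, x ((i : ℤ) + 1) m) = ∑ i ∈ Finset.range L, x (i : ℤ) m := by
    intro m
    exact shift_sum L (fun i => x i m) (fun i => hx m i)
  fin_cases k
  · show (∑ i ∈ Finset.range L, f (x ((i : ℤ) - 1)) (x (i : ℤ)) (x ((i : ℤ) + 1)) 0)
        = ∑ i ∈ Finset.range L, x (i : ℤ) 0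
    have e : ∀ i ∈ Finset.range L, f (x ((i : ℤ) - 1)) (x (i : ℤ)) (x ((i : ℤ) + 1)) 0
        = x ((i : ℤ) - 1) 0 * x (i : ℤ) 0 + x ((i : ℤ) + 1) 0 - x (i : ℤ) 0 * x ((i : ℤ) + 1) 0 := by
      intro i _
      rw [hf]
      show x ((i : ℤ) - 1) 0 * x (i : ℤ) 0 + x (i : ℤ) 1 * x ((i : ℤ) + 1) 0
          + x (i : ℤ) 2 * x ((i : ℤ) + 1) 0 = _
      linear_combination (x ((i : ℤ) + 1) 0) * hsum (i : ℤ)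
    rw [Finset.sum_congr rfl e]
    rw [Finset.sum_sub_distrib, Finset.sum_add_distrib, key 0, hshift1 0]
    ring
  · show (∑ i ∈ Finset.range L, f (x ((i : ℤ) - 1)) (x (i : ℤ)) (x ((i : ℤ) + 1)) 1)
        = ∑ i ∈ Finset.range L, x (i : ℤ) 1
    have e : ∀ i ∈ Finset.range L, f (x ((i : ℤ) - 1)) (x (i : ℤ)) (x ((i : ℤ) + 1)) 1
        = x ((i : ℤ) - 1) 1 * x (i : ℤ) 0 + x (i : ℤ) 1 - x (i : ℤ) 1 * x ((i : ℤ) + 1) 0 := by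
      intro i _
      rw [hf]
      show x ((i : ℤ) - 1) 1 * x (i : ℤ) 0 + x (i : ℤ) 1 * x ((i : ℤ) + 1) 1
          + x (i : ℤ) 1 * x ((i : ℤ) + 1) 2 = _
      linear_combination (x (i : ℤ) 1) * hsum ((i : ℤ) + 1)
    rw [Finset.sum_congr rfl e]
    rw [Finset.sum_sub_distrib, Finset.sum_add_distrib, key 1]
    ring
  · show (∑ i ∈ Finset.range L, f (x ((i : ℤ) - 1)) (x (i : ℤ)) (x ((i : ℤ) + 1)) 2)
        = ∑ i ∈ Finset.range L, x (i : ℤ) 2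
    have e : ∀ i ∈ Finset.range L, f (x ((i : ℤ) - 1)) (x (i : ℤ)) (x ((i : ℤ) + 1)) 2
        = x ((i : ℤ) - 1) 2 * x (i : ℤ) 0 + x (i : ℤ) 2 - x (i : ℤ) 2 * x ((i : ℤ) + 1) 0 := by
      intro i _
      rw [hf]
      show x ((i : ℤ) - 1) 2 * x (i : ℤ) 0 + x (i : ℤ) 2 * x ((i : ℤ) + 1) 1
          + x (i : ℤ) 2 * x ((i : ℤ) + 1) 2 = _
      linear_combination (x (i : ℤ) 2) * hsum ((i : ℤ) + 1)
    rw [Finset.sum_congr rfl e]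
    rw [Finset.sum_sub_distrib, Finset.sum_add_distrib, key 2]
    ring
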